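/- arXiv:0906.3438 — 4 statements merged into one kernel-verified Lean document; each statement's English description precedes it below -/
import Mathlib

section
/- Let ξ : U → ℝ be linear and u ∈ U with ξ(u) < 0. Suppose for some q > 0, t₀ > 0, constants β₁ ∈ [0,1), β₂ ≥ 0, κ > q, and functions Ω, G : the inequality −ξ(t·u) ≤ β₁·(Ω(u† + t·u) − Ω(u†) − ξ(t·u)) + β₂·G(t)^κ holds for all t ∈ (0, t₀], the limits L_Ω := lim_{t→0⁺} (Ω(u† + t·u) − Ω(u†))/t and L_S := lim_{t→0⁺} G(t)^q / t exist (L_S finite), and L_Ω = ξ(u). Then a contradiction follows; hence such a variational inequality can only hold with κ ≤ q. -/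
theorem stmt_6 {U : Type*} [AddCommGroup U] [Module ℝ U]
    (ξ : U →ₗ[ℝ] ℝ) (u udag : U) (Ω : U → ℝ) (G : ℝ → ℝ)
    (q t₀ β₁ β₂ κ : ℝ) (L_S : ℝ)
    (hξu : ξ u < 0) (hq : 0 < q) (ht₀ : 0 < t₀)
    (hβ₁ : 0 ≤ β₁) (hβ₁' : β₁ < 1) (hβ₂ : 0 ≤ β₂) (hκ : q < κ)
    (hG : ∀ t, 0 ≤ t → 0 ≤ G t)
    (hΩlim : Filter.Tendsto (fun t => (Ω (udag + t • u) - Ω udag) / t)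
      (nhdsWithin 0 (Set.Ioi 0)) (nhds (ξ u)))
    (hSlim : Filter.Tendsto (fun t => G t ^ q / t)
      (nhdsWithin 0 (Set.Ioi 0)) (nhds L_S))
    (hVI : ∀ t ∈ Set.Ioc (0 : ℝ) t₀,
      -ξ (t • u) ≤ β₁ * (Ω (udag + t • u) - Ω udag - ξ (t • u)) + β₂ * G t ^ κ) :
    False := by
  set l := nhdsWithin (0:ℝ) (Set.Ioi 0) with hl
  set f : ℝ → ℝ := fun t => β₁ * ((Ω (udag + t • u) - Ω udag) / t - ξ u)
      + β₂ * ((G t ^ q / t) ^ (κ / q) * t ^ (κ / q - 1)) with hfdef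
  have hc : 0 < κ / q - 1 := by
    have : 1 < κ / q := (one_lt_div hq).mpr hκ
    linarith
  have hcd : 0 < κ / q := by linarith
  -- eventual bound
  have hev : ∀ᶠ t in l, -ξ u ≤ f t := by
    filter_upwards [Ioc_mem_nhdsGT_of_mem (Set.left_mem_Ico.mpr ht₀)] with t ht
    have ht0 : 0 < t := ht.1
    have hGt : 0 ≤ G t := hG t ht0.le
    have htq : (0:ℝ) < t ^ (κ / q) := Real.rpow_pos_of_pos ht0 _
    have key : (G t ^ q / t) ^ (κ / q) * t ^ (κ / q - 1) = G t ^ κ / t := by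
      have h1 : (G t ^ q) ^ (κ / q) = G t ^ κ := by
        rw [← Real.rpow_mul hGt]
        congr 1
        field_simp
      have h2 : t ^ (κ / q - 1) = t ^ (κ / q) / t := by
        rw [Real.rpow_sub ht0, Real.rpow_one]
      rw [Real.div_rpow (Real.rpow_nonneg hGt q) ht0.le, h1, h2]
      field_simp
    have hvi := hVI t ht
    simp only [map_smul, smul_eq_mul] at hvi
    simp only [hfdef, key]
    rw [show β₁ * ((Ω (udag + t • u) - Ω udag) / t - ξ u) + β₂ * (G t ^ κ / t)
        = (β₁ * (Ω (udag + t • u) - Ω udag - t * ξ u) + β₂ * G t ^ κ) / t by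
      field_simp; try ring]
    rw [le_div_iff₀ ht0]
    nlinarith [hvi]
  -- limit of f is 0
  have h1 : Filter.Tendsto (fun t => (Ω (udag + t • u) - Ω udag) / t - ξ u) l (nhds 0) := by
    have := hΩlim.sub_const (ξ u)
    simpa using this
  have h2 : Filter.Tendsto (fun t => (G t ^ q / t) ^ (κ / q)) l (nhds (L_S ^ (κ / q))) :=
    ((Real.continuousAt_rpow_const L_S (κ / q) (Or.inr hcd.le)).tendsto).comp hSlim
  have h3 : Filter.Tendsto (fun t : ℝ => t ^ (κ / q - 1)) l (nhds 0) := by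
    have := (Real.continuousAt_rpow_const 0 (κ / q - 1) (Or.inr hc.le)).tendsto
    rw [Real.zero_rpow hc.ne'] at this
    exact this.mono_left nhdsWithin_le_nhds
  have hf_lim : Filter.Tendsto f l (nhds 0) := by
    have : Filter.Tendsto f l (nhds (β₁ * 0 + β₂ * (L_S ^ (κ / q) * 0))) :=
      (Filter.Tendsto.const_mul _ h1).add (Filter.Tendsto.const_mul _ (h2.mul h3))
    simpa using this
  have := ge_of_tendsto hf_lim hev
  linarith
end

section
/- Error estimate (Lemma): suppose B ≥ 0, S ≥ 0, δ ≥ 0, α > 0, 0 < κ < p, β₁ ∈ [0,1), β₂ ≥ 0, s ≥ 1, γ ≥ 0, r ≥ 0, d(r) ≥ 0, and the chain of inequalities α·(1−β₁)·B ≤ 2δ^p + α·c_κ·β₂·r^γ·s^κ·δ^κ − δ^p + α·c_κ·β₂·r^γ·s^κ·S^κ − S^p + α·d(r) holds, where c_κ := 1 if κ < 1 and 2^{κ−1} if κ ≥ 1. Then B ≤ K₁·δ^p/α + K₂·α^{κ/(p−κ)}·r^{γp/(p−κ)} + K₃·d(r), with K₁ = 2/(1−β₁), K₂ = 2·(c_κ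 β₂ s^κ)^{p/(p−κ)}·(κ/p)^{κ/(p−κ)}·(p−κ)/(p(1−β₁)), K₃ = 1/(1−β₁). -/
open Real

lemma young_aux {κ p M t : ℝ} (hκ : 0 < κ) (hκp : κ < p) (hM : 0 ≤ M) (ht : 0 ≤ t) :
    M * t ^ κ - t ^ p ≤ M ^ (p / (p - κ)) * (κ / p) ^ (κ / (p - κ)) * ((p - κ) / p) := by
  have hp : 0 < p := hκ.trans hκp
  have hpκ : 0 < p - κ := by linarith
  have hconj : (p / κ).HolderConjugate (p / (p - κ)) := by
    refine (Real.holderConjugate_iff_eq_conjExponent ?_).2 ?_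
    · rw [lt_div_iff₀ hκ]; linarith
    · field_simp
  have hc : (0:ℝ) ≤ (p / κ) ^ (κ / p) := rpow_nonneg (by positivity) _
  have hc' : (0:ℝ) ≤ (κ / p) ^ (κ / p) := rpow_nonneg (by positivity) _
  have key := Real.young_inequality_of_nonneg
    (mul_nonneg (rpow_nonneg ht κ) hc)
    (mul_nonneg hM hc') hconj
  have h1 : t ^ κ * (p / κ) ^ (κ / p) * (M * (κ / p) ^ (κ / p)) = M * t ^ κ := by
    have : (p / κ) ^ (κ / p) * (κ / p) ^ (κ / p) = 1 := by
      rw [← mul_rpow (by positivity) (by positivity), div_mul_div_comm, mul_comm,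
        div_self (by positivity), Real.one_rpow]
    calc t ^ κ * (p / κ) ^ (κ / p) * (M * (κ / p) ^ (κ / p))
        = M * t ^ κ * ((p / κ) ^ (κ / p) * (κ / p) ^ (κ / p)) := by ring
      _ = M * t ^ κ := by rw [this, mul_one]
  have h2 : (t ^ κ * (p / κ) ^ (κ / p)) ^ (p / κ) / (p / κ) = t ^ p := by
    rw [mul_rpow (rpow_nonneg ht κ) hc, ← rpow_mul ht, ← rpow_mul (by positivity)]
    have e1 : κ * (p / κ) = p := by field_simp
    have e2 : κ / p * (p / κ) = 1 := by field_simp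
    rw [e1, e2, rpow_one, mul_div_assoc, div_self (by positivity), mul_one]
  have h3 : (M * (κ / p) ^ (κ / p)) ^ (p / (p - κ)) / (p / (p - κ)) =
      M ^ (p / (p - κ)) * (κ / p) ^ (κ / (p - κ)) * ((p - κ) / p) := by
    rw [mul_rpow hM hc', ← rpow_mul (by positivity)]
    have e3 : κ / p * (p / (p - κ)) = κ / (p - κ) := by
      field_simp
      try ring
    rw [e3, div_eq_mul_inv, inv_div]
  rw [h1, h2, h3] at key
  linarith

theorem stmt_12 (B S δ α κ p β₁ β₂ s γ r dr : ℝ)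
    (hB : 0 ≤ B) (hS : 0 ≤ S) (hδ : 0 ≤ δ) (hα : 0 < α)
    (hκ : 0 < κ) (hκp : κ < p) (hβ₁ : 0 ≤ β₁) (hβ₁' : β₁ < 1)
    (hβ₂ : 0 ≤ β₂) (hs : 1 ≤ s) (hγ : 0 ≤ γ) (hr : 0 ≤ r) (hdr : 0 ≤ dr)
    (cκ : ℝ) (hcκ : cκ = if κ < 1 then (1 : ℝ) else 2 ^ (κ - 1))
    (hchain : α * (1 - β₁) * B ≤
      2 * δ ^ p + α * cκ * β₂ * r ^ γ * s ^ κ * δ ^ κ - δ ^ p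
        + α * cκ * β₂ * r ^ γ * s ^ κ * S ^ κ - S ^ p + α * dr) :
    B ≤ (2 / (1 - β₁)) * (δ ^ p / α)
      + (2 * (cκ * β₂ * s ^ κ) ^ (p / (p - κ)) * (κ / p) ^ (κ / (p - κ))
          * ((p - κ) / (p * (1 - β₁)))) * (α ^ (κ / (p - κ)) * r ^ (γ * p / (p - κ)))
      + (1 / (1 - β₁)) * dr := by
  have hp : 0 < p := hκ.trans hκp
  have hpκ : 0 < p - κ := by linarith
  have hβ : 0 < 1 - β₁ := by linarith
  have hcκ0 : 0 ≤ cκ := by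
    rw [hcκ]; split_ifs
    · norm_num
    · positivity
  set M := α * cκ * β₂ * r ^ γ * s ^ κ with hMdef
  have hs0 : (0:ℝ) ≤ s := by linarith
  have hM : 0 ≤ M := by positivity
  have hyd := young_aux hκ hκp hM hδ
  have hyS := young_aux hκ hκp hM hS
  set C := M ^ (p / (p - κ)) * (κ / p) ^ (κ / (p - κ)) * ((p - κ) / p) with hCdef
  have hfin : α * (1 - β₁) * B ≤ 2 * δ ^ p + 2 * C + α * dr := by
    have : M * δ ^ κ = α * cκ * β₂ * r ^ γ * s ^ κ * δ ^ κ := by rw [hMdef]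
    have : M * S ^ κ = α * cκ * β₂ * r ^ γ * s ^ κ * S ^ κ := by rw [hMdef]
    nlinarith [hyd, hyS]
  -- rewrite M ^ (p/(p-κ))
  have hA : (0:ℝ) ≤ cκ * β₂ * s ^ κ := by positivity
  have hMq : M ^ (p / (p - κ)) =
      α ^ (κ / (p - κ)) * α * ((cκ * β₂ * s ^ κ) ^ (p / (p - κ)) * r ^ (γ * p / (p - κ))) := by
    have hM' : M = α * (cκ * β₂ * s ^ κ) * r ^ γ := by rw [hMdef]; ring
    rw [hM', mul_rpow (by positivity) (rpow_nonneg hr γ),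
      mul_rpow hα.le hA, ← rpow_mul hr]
    have e1 : γ * (p / (p - κ)) = γ * p / (p - κ) := by ring
    have e2 : α ^ (p / (p - κ)) = α ^ (κ / (p - κ)) * α := by
      have h : p / (p - κ) = κ / (p - κ) + 1 := by field_simp; ring
      rw [h, rpow_add hα, rpow_one]
    rw [e1, e2]; ring
  have hBle : B ≤ (2 * δ ^ p + 2 * C + α * dr) / (α * (1 - β₁)) := by
    rw [le_div_iff₀ (by positivity)]
    nlinarith [hfin]
  refine hBle.trans (le_of_eq ?_)
  rw [hCdef, hMq]
  have hδp : (0:ℝ) ≤ δ ^ p := rpow_nonneg hδ p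
  field_simp
end

section
/- Suppose a variational inequality −ξ(u−u†) ≤ β₁·B(u) + β₂·S(u)^κ holds for all u ∈ M, with 0 < κ < μ. Then for every r > 0 and u ∈ M: −ξ(u−u†) − β₁·B(u) − β₂·r^γ·S(u)^μ ≤ (μ/κ)^{κ/(μ−κ)}·(μ/(μ−κ))·β₂·r^{−γκ/(μ−κ)}. Consequently the approximate-inequality distance function with exponent μ has majorant d̄(r) = a·r^{−bγ} with a = (μ/κ)^{κ/(μ−κ)}·(μ/(μ−κ))·β₂ and b = κ/(μ−κ). -/
theorem stmt_16 {U : Type*} [AddCommGroup U] [Module ℝ U]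
    (ξ : U →ₗ[ℝ] ℝ) (udag : U) (M : Set U) (B S : U → ℝ)
    (β₁ β₂ κ μ γ : ℝ)
    (hβ₁ : 0 ≤ β₁) (hβ₁' : β₁ < 1) (hβ₂ : 0 ≤ β₂)
    (hκ : 0 < κ) (hκμ : κ < μ) (hγ : 0 < γ)
    (hB : ∀ u ∈ M, 0 ≤ B u) (hS : ∀ u ∈ M, 0 ≤ S u)
    (hVI : ∀ u ∈ M, -ξ (u - udag) ≤ β₁ * B u + β₂ * S u ^ κ) :
    ∀ r > (0 : ℝ), ∀ u ∈ M,
      -ξ (u - udag) - β₁ * B u - β₂ * r ^ γ * S u ^ μ ≤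
        (μ / κ) ^ (κ / (μ - κ)) * (μ / (μ - κ)) * β₂ * r ^ (-(γ * κ / (μ - κ))) := by
  intro r hr u hu
  have hμκ : 0 < μ - κ := by linarith
  have hμ : 0 < μ := by linarith
  have hs : 0 ≤ S u := hS u hu
  have h1 := hVI u hu
  set s := S u with hsdef
  set t := r ^ (-(γ * κ / (μ - κ))) with htdef
  have ht : 0 < t := Real.rpow_pos_of_pos hr _
  -- coefficient ≥ 1
  have hc1 : (1 : ℝ) ≤ (μ / κ) ^ (κ / (μ - κ)) :=
    Real.one_le_rpow ((one_le_div hκ).mpr hκμ.le) (by positivity)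
  have hc2 : (1 : ℝ) ≤ μ / (μ - κ) := (one_le_div hμκ).mpr (by linarith)
  have hcoef : (1 : ℝ) ≤ (μ / κ) ^ (κ / (μ - κ)) * (μ / (μ - κ)) :=
    one_le_mul_of_one_le_of_one_le hc1 hc2
  have hC : β₂ * t ≤ (μ / κ) ^ (κ / (μ - κ)) * (μ / (μ - κ)) * β₂ * t := by
    nlinarith [mul_nonneg hβ₂ ht.le]
  have key : β₂ * s ^ κ - β₂ * r ^ γ * s ^ μ ≤
      (μ / κ) ^ (κ / (μ - κ)) * (μ / (μ - κ)) * β₂ * t := by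
    rcases le_or_gt (s ^ κ) t with hcase | hcase
    · have h2 : 0 ≤ β₂ * r ^ γ * s ^ μ := by positivity
      have : β₂ * s ^ κ ≤ β₂ * t := mul_le_mul_of_nonneg_left hcase hβ₂
      linarith
    · -- s^κ > t : then r^γ s^μ ≥ s^κ
      have hspos : 0 < s := by
        by_contra h
        push_neg at h
        have : s = 0 := le_antisymm h hs
        rw [this, Real.zero_rpow hκ.ne'] at hcase
        exact absurd hcase (not_lt.mpr ht.le)
      have hexp : -(γ * κ / (μ - κ)) * ((μ - κ) / κ) = -γ := by
        field_simp
      have hexp2 : κ * ((μ - κ) / κ) = μ - κ := by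
        field_simp
      have hlt : r ^ (-γ) < s ^ (μ - κ) := by
        have := Real.rpow_lt_rpow ht.le hcase (by positivity : 0 < (μ - κ) / κ)
        rwa [htdef, ← Real.rpow_mul hr.le, ← Real.rpow_mul hs, hexp, hexp2] at this
      have hlt' : (1 : ℝ) < r ^ γ * s ^ (μ - κ) := by
        have h3 : r ^ γ * r ^ (-γ) < r ^ γ * s ^ (μ - κ) :=
          mul_lt_mul_of_pos_left hlt (Real.rpow_pos_of_pos hr γ)
        rwa [← Real.rpow_add hr, add_neg_cancel, Real.rpow_zero] at h3
      have hsum : s ^ μ = s ^ (μ - κ) * s ^ κ := by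
        rw [← Real.rpow_add hspos]; ring_nf
      have hge : s ^ κ ≤ r ^ γ * s ^ μ := by
        rw [hsum]
        calc s ^ κ = 1 * s ^ κ := by ring
        _ ≤ (r ^ γ * s ^ (μ - κ)) * s ^ κ := by
            apply mul_le_mul_of_nonneg_right hlt'.le (by positivity)
        _ = r ^ γ * (s ^ (μ - κ) * s ^ κ) := by ring
      have hC0 : 0 ≤ (μ / κ) ^ (κ / (μ - κ)) * (μ / (μ - κ)) * β₂ * t := by
        have := Real.rpow_nonneg (by positivity : (0:ℝ) ≤ μ / κ) (κ / (μ - κ))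
        positivity
      nlinarith
  linarith
end

section
/- Approximate source condition implies approximate variational inequality (Banach spaces, case c₂ = 0): Let U, V be normed spaces, A : U → V a bounded linear operator, ξ ∈ U*, u† ∈ U. Suppose ‖F(u) − F(u†) − A(u−u†)‖ ≤ K‖F(u) − F(u†)‖^{c₁} for all u ∈ M, where 0 < c₁ ≤ 1, and ‖u − u†‖ ≤ K_ᾱ and ‖F(u) − F(u†)‖ ≤ (ρᾱ)^{1/p} for all u ∈ M. Define d̃(r) := inf{‖ξ − A*η‖ : η ∈ V*, ‖η‖ ≤ r} (infimum attained). Then for all u ∈ M and r ≥ 0: −ξ(u−u†) ≤ (K + (ρᾱ)^{(1−c₁)/p})·r·‖F(u)−F(u†)‖^{c₁} + K_ᾱ·d̃(r). -/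
theorem stmt_18 {U V : Type*} [NormedAddCommGroup U] [NormedSpace ℝ U]
    [NormedAddCommGroup V] [NormedSpace ℝ V]
    (A : U →L[ℝ] V) (ξ : U →L[ℝ] ℝ) (udag : U) (M : Set U) (F : U → V)
    (K Kᾱ ρ ᾱ p c₁ : ℝ)
    (hK : 0 < K) (hKᾱ : 0 < Kᾱ) (hρ : 0 < ρ) (hᾱ : 0 < ᾱ) (hp : 0 < p)
    (hc₁ : 0 < c₁) (hc₁' : c₁ ≤ 1)
    (hnl : ∀ u ∈ M, ‖F u - F udag - A (u - udag)‖ ≤ K * ‖F u - F udag‖ ^ c₁)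
    (hub : ∀ u ∈ M, ‖u - udag‖ ≤ Kᾱ)
    (hFb : ∀ u ∈ M, ‖F u - F udag‖ ≤ (ρ * ᾱ) ^ (1 / p))
    (dtil : ℝ → ℝ)
    (hdtil : ∀ r ≥ (0 : ℝ), ∃ η : V →L[ℝ] ℝ, ‖η‖ ≤ r ∧ ‖ξ - η.comp A‖ = dtil r) :
    ∀ u ∈ M, ∀ r ≥ (0 : ℝ),
      -ξ (u - udag) ≤
        (K + (ρ * ᾱ) ^ ((1 - c₁) / p)) * r * ‖F u - F udag‖ ^ c₁ + Kᾱ * dtil r := by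
  intro u hu r hr
  obtain ⟨η, hηr, hη⟩ := hdtil r hr
  set x := u - udag with hx
  set w := F u - F udag with hw
  have hρᾱ : (0 : ℝ) < ρ * ᾱ := mul_pos hρ hᾱ
  have hwc : (0 : ℝ) ≤ ‖w‖ ^ c₁ := Real.rpow_nonneg (norm_nonneg w) c₁
  -- norm bound on w by (ρᾱ)^{(1-c₁)/p} * ‖w‖^{c₁}
  have hwkey : ‖w‖ ≤ (ρ * ᾱ) ^ ((1 - c₁) / p) * ‖w‖ ^ c₁ := by
    rcases eq_or_lt_of_le (norm_nonneg w) with h0 | h0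
    · rw [← h0, Real.zero_rpow (ne_of_gt hc₁), mul_zero]
    · have h1 : ‖w‖ = ‖w‖ ^ (1 - c₁) * ‖w‖ ^ c₁ := by
        rw [← Real.rpow_add h0, sub_add_cancel, Real.rpow_one]
      nth_rewrite 1 [h1]
      apply mul_le_mul_of_nonneg_right _ hwc
      calc ‖w‖ ^ (1 - c₁) ≤ ((ρ * ᾱ) ^ (1 / p)) ^ (1 - c₁) :=
            Real.rpow_le_rpow (norm_nonneg w) (hFb u hu) (by linarith)
        _ = (ρ * ᾱ) ^ ((1 - c₁) / p) := by
            rw [← Real.rpow_mul (le_of_lt hρᾱ)]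
            ring_nf
  -- split
  have hsplit : -ξ x = -((ξ - η.comp A) x) + (η (w - A x) - η w) := by
    simp [map_sub]; ring
  rw [hsplit]
  have h2 : -((ξ - η.comp A) x) ≤ Kᾱ * dtil r := by
    calc -((ξ - η.comp A) x) ≤ |((ξ - η.comp A) x)| := neg_le_abs _
      _ ≤ ‖ξ - η.comp A‖ * ‖x‖ := (ξ - η.comp A).le_opNorm x
      _ ≤ dtil r * Kᾱ := by
          rw [hη]
          have hd : 0 ≤ dtil r := hη ▸ norm_nonneg _
          exact mul_le_mul_of_nonneg_left (hub u hu) hd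
      _ = Kᾱ * dtil r := mul_comm _ _
  have h3 : η (w - A x) - η w ≤ (K + (ρ * ᾱ) ^ ((1 - c₁) / p)) * r * ‖w‖ ^ c₁ := by
    have ha : η (w - A x) ≤ r * (K * ‖w‖ ^ c₁) := by
      calc η (w - A x) ≤ ‖η‖ * ‖w - A x‖ := le_trans (le_abs_self _) (η.le_opNorm _)
        _ ≤ r * (K * ‖w‖ ^ c₁) := by
            apply mul_le_mul hηr (hnl u hu) (norm_nonneg _) (le_trans (norm_nonneg _) hηr)
    have hb : -η w ≤ r * ((ρ * ᾱ) ^ ((1 - c₁) / p) * ‖w‖ ^ c₁) := by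
      calc -η w ≤ ‖η‖ * ‖w‖ := le_trans (neg_le_abs _) (η.le_opNorm _)
        _ ≤ r * ((ρ * ᾱ) ^ ((1 - c₁) / p) * ‖w‖ ^ c₁) :=
            mul_le_mul hηr hwkey (norm_nonneg _) (le_trans (norm_nonneg _) hηr)
    nlinarith [ha, hb]
  linarith
end
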